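/- Let M be a homogeneous and monotone mean on (0,∞), and suppose there is a sequence (aₙ) of positive reals with: (1) Σ aₙ = +∞; (2) the sequence bₙ := M(a₁,…,aₙ)/aₙ is nearly increasing and tends to +∞; (3) Σ aₙ·bₙ^{−s} < +∞ for some s > 0. Then M is not a weak-Hardy mean; i.e., there exists a summable sequence (cₙ) of positive reals with Σₙ M(c₁,…,cₙ) = +∞. -/

import Mathlib

/-- `M` is a mean on the set `I`: its value on every nonempty tuple from `I`
lies between the minimum and the maximum of the tuple. -/
def IsMeanOn (I : Set ℝ) (M : ∀ n : ℕ, (Fin n → ℝ) → ℝ) : Prop :=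
  ∀ (n : ℕ) (a : Fin (n + 1) → ℝ), (∀ i, a i ∈ I) →
    (⨅ i, a i) ≤ M (n + 1) a ∧ M (n + 1) a ≤ ⨆ i, a i

/-- `M` is (positively) homogeneous. -/
def IsHomogeneousMean (M : ∀ n : ℕ, (Fin n → ℝ) → ℝ) : Prop :=
  ∀ (t : ℝ), 0 < t → ∀ (n : ℕ) (a : Fin n → ℝ), (∀ i, 0 < a i) →
    M n (fun i => t * a i) = t * M n a

/-- `M` is monotone (nondecreasing in each variable). -/
def IsMonotoneMean (M : ∀ n : ℕ, (Fin n → ℝ) → ℝ) : Prop :=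
  ∀ (n : ℕ) (a b : Fin n → ℝ), (∀ i, 0 < a i) → (∀ i, a i ≤ b i) →
    M n a ≤ M n b

/-- `M` is repetition invariant: repeating every entry `m` times does not
change the value of the mean. -/
def IsRepetitionInvariant (M : ∀ n : ℕ, (Fin n → ℝ) → ℝ) : Prop :=
  ∀ (n m : ℕ), 0 < m → ∀ (a : Fin n → ℝ), (∀ i, 0 < a i) →
    M (n * m) (fun i => a ⟨(i : ℕ) / m, Nat.div_lt_of_lt_mul
      (lt_of_lt_of_eq i.isLt (Nat.mul_comm n m))⟩) = M n a

/-- `M` is a weak-Hardy mean on `I`: for every summable sequence in `I` the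
sequence of running means is summable. -/
def IsWeakHardyMean (I : Set ℝ) (M : ∀ n : ℕ, (Fin n → ℝ) → ℝ) : Prop :=
  ∀ a : ℕ → ℝ, (∀ n, a n ∈ I) → Summable a →
    Summable (fun n => M (n + 1) (fun k : Fin (n + 1) => a (k : ℕ)))

theorem stmt_5 (M : ∀ n : ℕ, (Fin n → ℝ) → ℝ)
    (hmean : IsMeanOn (Set.Ioi 0) M)
    (hhom : IsHomogeneousMean M) (hmono : IsMonotoneMean M)
    (a : ℕ → ℝ) (ha : ∀ n, 0 < a n)
    (b : ℕ → ℝ)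
    (hb : ∀ n, b n = M (n + 1) (fun k : Fin (n + 1) => a (k : ℕ)) / a n)
    (h1 : ¬ Summable a)
    (h2 : ∃ ε : ℝ, 0 < ε ∧ ∀ m n : ℕ, m ≤ n → ε * b m ≤ b n)
    (h2' : Filter.Tendsto b Filter.atTop Filter.atTop)
    (h3 : ∃ s : ℝ, 0 < s ∧ Summable (fun n => a n * (b n) ^ (-s))) :
    ¬ IsWeakHardyMean (Set.Ioi 0) M ∧
      ∃ c : ℕ → ℝ, (∀ n, 0 < c n) ∧ Summable c ∧
        ¬ Summable (fun n => M (n + 1) (fun k : Fin (n + 1) => c (k : ℕ))) := by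
  obtain ⟨ε, hε, hεb⟩ := h2
  obtain ⟨s, hs, hsum⟩ := h3
  -- positivity of b
  have hposb : ∀ n, 0 < b n := by
    intro n
    have h := hmean n (fun k : Fin (n + 1) => a (k : ℕ)) (fun i => ha _)
    obtain ⟨j, hj⟩ := Finite.exists_min (fun i : Fin (n + 1) => a (i : ℕ))
    have hji : a (j : ℕ) ≤ ⨅ i : Fin (n + 1), a (i : ℕ) := le_ciInf hj
    have hMpos : 0 < M (n + 1) (fun k : Fin (n + 1) => a (k : ℕ)) :=
      lt_of_lt_of_le (ha _) (hji.trans h.1)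
    rw [hb n]
    exact div_pos hMpos (ha n)
  have hMval : ∀ n, M (n + 1) (fun k : Fin (n + 1) => a (k : ℕ)) = b n * a n := by
    intro n
    rw [hb n, div_mul_cancel₀ _ (ne_of_gt (ha n))]
  -- the key inductive claim
  have key : ∀ k : ℕ, ∀ s : ℝ, 0 < s → s ≤ (k : ℝ) →
      Summable (fun n => a n * (b n) ^ (-s)) →
      ∃ c : ℕ → ℝ, (∀ n, 0 < c n) ∧ Summable c ∧
        ¬ Summable (fun n => M (n + 1) (fun k : Fin (n + 1) => c (k : ℕ))) := by
    intro k
    induction k with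
    | zero => intro s hs hsk _; norm_num at hsk; linarith
    | succ k ih =>
      intro s hs hsk hsum
      by_cases hS : Summable (fun n => a n * (b n) ^ (1 - s))
      · -- convergent case: show s > 1 and recurse
        have hs1 : 1 < s := by
          by_contra hle
          push_neg at hle
          obtain ⟨N, hN⟩ := Filter.eventually_atTop.mp (h2'.eventually_ge_atTop 1)
          apply h1
          refine (summable_nat_add_iff N).mp ?_
          refine Summable.of_nonneg_of_le (fun n => (ha _).le) (fun n => ?_)
            ((summable_nat_add_iff N).mpr hS)
          exact le_mul_of_one_le_right (ha _).le
            (Real.one_le_rpow (hN _ (Nat.le_add_left N n)) (by linarith))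
        have hsum' : Summable (fun n => a n * (b n) ^ (-(s - 1))) := by
          simpa [neg_sub] using hS
        exact ih (s - 1) (by linarith) (by push_cast at hsk ⊢; linarith) hsum'
      · -- divergent case: construct c
        set c : ℕ → ℝ := fun n => a n * (b n) ^ (-s) with hc
        have hcpos : ∀ n, 0 < c n := fun n =>
          mul_pos (ha n) (Real.rpow_pos_of_pos (hposb n) _)
        refine ⟨c, hcpos, hsum, ?_⟩
        -- lower bound on the running means of c
        have hlow : ∀ n, ε ^ s * (a n * (b n) ^ (1 - s)) ≤
            M (n + 1) (fun k : Fin (n + 1) => c (k : ℕ)) := by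
          intro n
          set t : ℝ := ε ^ s * (b n) ^ (-s) with ht
          have htpos : 0 < t :=
            mul_pos (Real.rpow_pos_of_pos hε _) (Real.rpow_pos_of_pos (hposb n) _)
          have hcmp : ∀ i : Fin (n + 1), t * a (i : ℕ) ≤ c (i : ℕ) := by
            intro i
            have hk : (i : ℕ) ≤ n := Nat.lt_succ_iff.mp i.isLt
            have hbk : b (i : ℕ) ≤ b n / ε := by
              rw [le_div_iff₀ hε]
              have := hεb (i : ℕ) n hk
              linarith
            have h1' : (b n / ε) ^ (-s) ≤ (b (i : ℕ)) ^ (-s) :=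
              Real.rpow_le_rpow_of_nonpos (hposb _) hbk (by linarith)
            have h2'' : (b n / ε) ^ (-s) = ε ^ s * (b n) ^ (-s) := by
              rw [Real.div_rpow (hposb n).le hε.le, Real.rpow_neg hε.le]
              field_simp
            calc t * a (i : ℕ) = a (i : ℕ) * ((b n / ε) ^ (-s)) := by
                  rw [h2'']; ring
              _ ≤ a (i : ℕ) * (b (i : ℕ)) ^ (-s) :=
                  mul_le_mul_of_nonneg_left h1' (ha _).le
              _ = c (i : ℕ) := rfl
          have hm := hmono (n + 1) (fun i : Fin (n + 1) => t * a (i : ℕ))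
            (fun i : Fin (n + 1) => c (i : ℕ))
            (fun i => mul_pos htpos (ha _)) hcmp
          have hh := hhom t htpos (n + 1) (fun i : Fin (n + 1) => a (i : ℕ))
            (fun i => ha _)
          rw [hh, hMval n] at hm
          calc ε ^ s * (a n * (b n) ^ (1 - s)) = t * (b n * a n) := by
                rw [ht, show (1 : ℝ) - s = -s + 1 by ring,
                  Real.rpow_add (hposb n), Real.rpow_one]
                ring
            _ ≤ _ := hm
        intro habs
        apply hS
        have hsum2 : Summable (fun n => ε ^ s * (a n * (b n) ^ (1 - s))) :=
          Summable.of_nonneg_of_le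
            (fun n => by have := ha n; have := hposb n; positivity) hlow habs
        exact (summable_mul_left_iff (ne_of_gt (Real.rpow_pos_of_pos hε s))).mp hsum2
  have main := key ⌈s⌉₊ s hs (Nat.le_ceil s) hsum
  refine ⟨?_, main⟩
  intro hWH
  obtain ⟨c, hc, hcs, hcM⟩ := main
  exact hcM (hWH c (fun n => Set.mem_Ioi.mpr (hc n)) hcs)
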